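/- Fix n ≥ 1 and set θ := π / (2 * n). Let R : Matrix (Fin 2) (Fin 2) ℝ be the rotation matrix !![cos θ, -sin θ; sin θ, cos θ], let e₀ := ![1, 0], and let φ_i := (R^i).mulVec e₀ for 0 ≤ i ≤ n. Then the product of projectors satisfies ((vecMulVec φ_n φ_n) * (vecMulVec φ_{n-1} φ_{n-1}) * ⋯ * (vecMulVec φ_1 φ_1)).mulVec e₀ = (cos θ)^n • φ_n, where vecMulVec φ φ is the rank-one projector onto the unit vector φ and the product is taken with index decreasing from n to 1. -/

import Mathlib

open Matrix

noncomputable section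

private lemma zeno_phi (θ : ℝ) (i : ℕ) :
    ((!![Real.cos θ, -Real.sin θ; Real.sin θ, Real.cos θ] : Matrix (Fin 2) (Fin 2) ℝ) ^ i).mulVec
      ![1, 0] = ![Real.cos (i * θ), Real.sin (i * θ)] := by
  induction i with
  | zero => funext j; fin_cases j <;> simp
  | succ i ih =>
      rw [pow_succ', ← Matrix.mulVec_mulVec, ih]
      funext j
      have h : ((i : ℝ) + 1) * θ = θ + i * θ := by ring
      fin_cases j <;>
        simp [Matrix.mulVec, dotProduct, Fin.sum_univ_two, Nat.cast_succ, h,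
          Real.cos_add, Real.sin_add] <;> ring

private lemma vecMulVec_mulVec' (u w v : Fin 2 → ℝ) :
    (Matrix.vecMulVec u w).mulVec v = (w ⬝ᵥ v) • u := by
  funext j
  simp [Matrix.vecMulVec, Matrix.mulVec, dotProduct, Fin.sum_univ_two]
  ring

/-- Discrete quantum Zeno identity: applying the projectors onto
`φ_n, φ_{n-1}, …, φ_1` (in decreasing order) to `e₀` yields `(cos θ)^n • φ_n`. -/
theorem zeno_projector_product (n : ℕ) (hn : 1 ≤ n) :
    let θ : ℝ := Real.pi / (2 * n)
    let R : Matrix (Fin 2) (Fin 2) ℝ :=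
      !![Real.cos θ, -Real.sin θ; Real.sin θ, Real.cos θ]
    let e₀ : Fin 2 → ℝ := ![1, 0]
    let φ : ℕ → Fin 2 → ℝ := fun i => (R ^ i).mulVec e₀
    (((List.range n).map fun k =>
        Matrix.vecMulVec (φ (n - k)) (φ (n - k))).prod).mulVec e₀
      = (Real.cos θ) ^ n • φ n := by
  intro θ R e₀ φ
  have hφ : ∀ i, φ i = ![Real.cos (i * θ), Real.sin (i * θ)] := fun i => zeno_phi θ i
  have hdot : ∀ i : ℕ, φ (i + 1) ⬝ᵥ φ i = Real.cos θ := by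
    intro i
    rw [hφ, hφ]
    have h : ((i : ℝ) + 1) * θ - i * θ = θ := by ring
    have h2 : Real.cos θ = Real.cos (((i:ℝ)+1)*θ - (i:ℝ)*θ) := by rw [h]
    simp only [dotProduct, Fin.sum_univ_two, Matrix.cons_val_zero, Matrix.cons_val_one,
      Matrix.head_cons]
    rw [h2, Real.cos_sub]
    push_cast
    ring
  -- general claim
  have key : ∀ m, m ≤ n →
      (((List.range m).map fun k =>
          Matrix.vecMulVec (φ (n - k)) (φ (n - k))).prod).mulVec (φ (n - m))
        = (Real.cos θ) ^ m • φ n := by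
    intro m
    induction m with
    | zero => intro _; simp
    | succ m ih =>
        intro hm
        have hm' : m ≤ n := Nat.le_of_succ_le hm
        rw [List.range_succ, List.map_append, List.prod_append]
        simp only [List.map_cons, List.map_nil, List.prod_cons, List.prod_nil, mul_one]
        rw [← Matrix.mulVec_mulVec, vecMulVec_mulVec']
        have hsub : n - m = (n - (m + 1)) + 1 := by omega
        rw [hsub, hdot]
        rw [Matrix.mulVec_smul, ← hsub, ih hm', pow_succ]
        rw [smul_smul]
        ring_nf
  have h0 : φ (n - n) = e₀ := by simp [φ, e₀]
  have := key n le_rfl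
  rwa [h0] at this
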